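/- arXiv:2511.09176 — 2 statements merged into one kernel-verified Lean document; each statement's English description precedes it below -/
import Mathlib

section
/- Let K be an algebraically closed field, A a K-algebra, and M a finite-dimensional K-vector space which is an A-module. Then M is a simple A-module if and only if the structure homomorphism A → End_K(M) is surjective. -/
open LinearMap Module

theorem schur_scalar' (K A M : Type*) [Field K] [IsAlgClosed K] [Ring A] [Algebra K A]
    [AddCommGroup M] [Module K M] [Module A M] [IsScalarTower K A M]
    [FiniteDimensional K M] [Nontrivial M] (hs : IsSimpleModule A M)
    (φ : M →ₗ[A] M) : ∃ c : K, ∀ m : M, φ m = c • m := by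
  obtain ⟨μ, hμ⟩ := Module.End.exists_eigenvalue
    ((φ.restrictScalars K : M →ₗ[K] M) : Module.End K M)
  obtain ⟨x, hx⟩ := hμ.exists_hasEigenvector
  refine ⟨μ, ?_⟩
  set ψ : M →ₗ[A] M := φ - μ • LinearMap.id with hψ
  have hker : LinearMap.ker ψ ≠ ⊥ := by
    intro h
    have hxker : x ∈ LinearMap.ker ψ := by
      simp only [hψ, LinearMap.mem_ker, LinearMap.sub_apply, LinearMap.smul_apply,
        LinearMap.id_apply]
      have := hx.apply_eq_smul
      simp only [LinearMap.restrictScalars_apply] at this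
      rw [this, sub_self]
    rw [h, Submodule.mem_bot] at hxker
    exact hx.right hxker
  have : LinearMap.ker ψ = ⊤ := (hs.eq_bot_or_eq_top _).resolve_left hker
  intro m
  have hm : m ∈ LinearMap.ker ψ := this ▸ Submodule.mem_top
  simpa [hψ, sub_eq_zero] using hm

/-- Wedderburn/Jacobson density over an algebraically closed field: a nonzero
finite-dimensional module `M` over a `K`-algebra `A` is simple if and only if the structure
homomorphism `A → End_K(M)` is surjective. -/
theorem stmt8 (K A M : Type*) [Field K] [IsAlgClosed K] [Ring A] [Algebra K A]
    [AddCommGroup M] [Module K M] [Module A M] [IsScalarTower K A M]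
    [FiniteDimensional K M] [Nontrivial M] :
    IsSimpleModule A M ↔ Function.Surjective (Algebra.lsmul K K M : A →ₐ[K] Module.End K M) := by
  constructor
  · intro hs
    haveI : IsSemisimpleModule A M := by infer_instance
    intro f
    let n := Module.finrank K M
    let b : Basis (Fin n) K M := Module.finBasis K M
    haveI : IsSemisimpleModule A (Fin n → M) :=
      isSemisimpleModule_of_isSemisimpleModule_submodule'
        (p := fun i => LinearMap.range (LinearMap.single A (fun _ : Fin n => M) i))
        (fun i => .range _)
        (by simp_rw [range_eq_map, Submodule.iSup_map_single, Submodule.pi_top])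
    set v : Fin n → M := fun i => b i with hvdef
    set W : Submodule A (Fin n → M) := Submodule.span A {v} with hW
    obtain ⟨W', hW'⟩ := exists_isCompl W
    set p : (Fin n → M) →ₗ[A] (Fin n → M) :=
      W.subtype ∘ₗ (W.projectionOnto W' hW') with hpdef
    have hrange : ∀ x, p x ∈ W := fun x => (W.projectionOnto W' hW' x).2
    obtain ⟨c, hc⟩ := Classical.axiomOfChoice (fun ij : Fin n × Fin n =>
      schur_scalar' K A M hs
        ((LinearMap.proj ij.1) ∘ₗ p ∘ₗ (LinearMap.single A (fun _ : Fin n => M) ij.2)))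
    have hp : ∀ (x : Fin n → M) (i : Fin n), p x i = ∑ j, c (i, j) • x j := by
      intro x i
      have hx : x = ∑ j, Pi.single j (x j) := (Finset.univ_sum_single x).symm
      calc p x i = p (∑ j, Pi.single j (x j)) i := by rw [← hx]
        _ = ∑ j, p (Pi.single j (x j)) i := by rw [map_sum]; simp
        _ = ∑ j, c (i, j) • x j := by
            refine Finset.sum_congr rfl fun j _ => ?_
            exact hc (i, j) (x j)
    have hvW : v ∈ W := Submodule.mem_span_singleton_self v
    have hv : p v = v := by
      simp only [hpdef, LinearMap.comp_apply]
      rw [show v = ((⟨v, hvW⟩ : W) : Fin n → M) from rfl,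
        Submodule.projectionOnto_apply_left]
      rfl
    set w : Fin n → M := fun i => f (b i) with hwdef
    have hw : p w = w := by
      funext i
      have h1 : ∑ j, c (i, j) • v j = v i := by rw [← hp v i, hv]
      calc p w i = ∑ j, c (i, j) • w j := hp w i
        _ = ∑ j, c (i, j) • f (v j) := rfl
        _ = f (∑ j, c (i, j) • v j) := by rw [map_sum]; simp
        _ = f (v i) := by rw [h1]
        _ = w i := rfl
    have hwW : w ∈ W := hw ▸ hrange w
    obtain ⟨a, ha⟩ := Submodule.mem_span_singleton.1 hwW
    refine ⟨a, ?_⟩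
    apply b.ext
    intro i
    have := congrFun ha i
    simpa using this
  · intro hsurj
    refine { eq_bot_or_eq_top := ?_ }
    intro N
    rcases eq_or_ne N ⊥ with h | h
    · exact Or.inl h
    · refine Or.inr ?_
      obtain ⟨x, hxN, hx0⟩ := Submodule.exists_mem_ne_zero_of_ne_bot h
      rw [Submodule.eq_top_iff']
      intro m
      have hinj : LinearMap.ker (LinearMap.toSpanSingleton K M x) = ⊥ := by
        exact LinearMap.ker_toSpanSingleton (R := K) (M := M) hx0
      obtain ⟨g, hg⟩ := (LinearMap.toSpanSingleton K M x).exists_leftInverse_of_injective hinj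
      set fm : M →ₗ[K] M := (LinearMap.toSpanSingleton K M m) ∘ₗ g with hfm
      have hfmx : fm x = m := by
        have : g x = 1 := by
          have := congrFun (congrArg DFunLike.coe hg) 1
          simpa [LinearMap.toSpanSingleton_apply] using this
        simp [hfm, this, LinearMap.toSpanSingleton_apply]
      obtain ⟨a, ha⟩ := hsurj fm
      have : a • x = m := by
        have := congrFun (congrArg DFunLike.coe ha) x
        simpa [Algebra.lsmul_coe] using (this.trans hfmx)
      exact this ▸ N.smul_mem a hxN
end

section
/- Let K be an algebraically closed field. Then every maximal ideal of K[x₁,…,xₙ] is of the form (x₁−a₁,…,xₙ−aₙ) for some point (a₁,…,aₙ) ∈ Kⁿ, giving a bijection between Kⁿ and the set of maximal ideals of K[x₁,…,xₙ]. -/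
open MvPolynomial

lemma sub_C_eval_mem_span {K : Type*} [CommRing K] {n : ℕ} (a : Fin n → K)
    (p : MvPolynomial (Fin n) K) :
    p - C (eval a p) ∈ Ideal.span (Set.range fun i : Fin n =>
      (X i : MvPolynomial (Fin n) K) - C (a i)) := by
  induction p using MvPolynomial.induction_on with
  | C c => simp
  | add p q hp hq =>
    have : p + q - C (eval a (p + q)) = (p - C (eval a p)) + (q - C (eval a q)) := by
      rw [map_add, map_add]; ring
    rw [this]
    exact Ideal.add_mem _ hp hq
  | mul_X p i hp =>
    have : p * X i - C (eval a (p * X i)) =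
        p * ((X i : MvPolynomial (Fin n) K) - C (a i)) + (p - C (eval a p)) * C (a i) := by
      rw [map_mul, eval_X, map_mul]; ring
    rw [this]
    exact Ideal.add_mem _
      (Ideal.mul_mem_left _ _ (Ideal.subset_span ⟨i, rfl⟩))
      (Ideal.mul_mem_right _ _ hp)

lemma vanishingIdeal_singleton_eq_span {K : Type*} [Field K] {n : ℕ} (a : Fin n → K) :
    (vanishingIdeal K {a} : Ideal (MvPolynomial (Fin n) K)) =
      Ideal.span (Set.range fun i : Fin n =>
        (X i : MvPolynomial (Fin n) K) - C (a i)) := by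
  apply le_antisymm
  · intro p hp
    rw [mem_vanishingIdeal_singleton_iff] at hp
    change eval a p = 0 at hp
    have := sub_C_eval_mem_span a p
    rwa [hp, map_zero, sub_zero] at this
  · rw [Ideal.span_le]
    rintro _ ⟨i, rfl⟩
    rw [SetLike.mem_coe, mem_vanishingIdeal_singleton_iff]
    simp

/-- Weak Nullstellensatz: over an algebraically closed field `K`, every maximal ideal of
`K[x₁,…,xₙ]` equals `(x₁-a₁,…,xₙ-aₙ)` for a unique point `a ∈ Kⁿ`, and every such ideal is
maximal; thus `a ↦ (x₁-a₁,…,xₙ-aₙ)` is a bijection from `Kⁿ` onto the maximal ideals. -/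
theorem stmt13 (K : Type*) [Field K] [IsAlgClosed K] (n : ℕ) :
    (∀ m : Ideal (MvPolynomial (Fin n) K), m.IsMaximal →
      ∃! a : Fin n → K,
        m = Ideal.span (Set.range fun i : Fin n =>
          (X i : MvPolynomial (Fin n) K) - C (a i))) ∧
    (∀ a : Fin n → K,
      (Ideal.span (Set.range fun i : Fin n =>
        (X i : MvPolynomial (Fin n) K) - C (a i))).IsMaximal) := by
  constructor
  · intro m hm
    obtain ⟨a, ha⟩ := (isMaximal_iff_eq_vanishingIdeal_singleton (I := m)).mp hm
    refine ⟨a, by rw [ha, vanishingIdeal_singleton_eq_span], ?_⟩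
    intro b hb
    funext i
    have hmem : (X i : MvPolynomial (Fin n) K) - C (b i) ∈ m := by
      rw [hb]; exact Ideal.subset_span ⟨i, rfl⟩
    rw [ha, mem_vanishingIdeal_singleton_iff] at hmem
    exact (sub_eq_zero.mp (by simpa using hmem)).symm
  · intro a
    rw [← vanishingIdeal_singleton_eq_span]
    infer_instance
end
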